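/- Let G be an exactly k-edge-connected multigraph and let S = ⟨V₁, V₂⟩ be a non-trivial minimum edge cut of G, say S = {(uᵢ,vᵢ) ∈ V₁ × V₂ : 1 ≤ i ≤ k}. Let G₁ be the multigraph on vertex set V₁ ∪ {x₁} whose edges are the edges of G with both endpoints in V₁ together with k new edges (x₁,uᵢ) for 1 ≤ i ≤ k, and let G₂ be the multigraph on vertex set V₂ ∪ {x₂} whose edges are the edges of G with both endpoints in V₂ together with k new edges (x₂,vᵢ) for 1 ≤ i ≤ k. Then both G₁ and G₂ are exactly k-edge-connected. -/

import Mathlib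

/-- A multigraph on vertex type `V` with edge type `E`: each edge is assigned
an unordered pair of endpoints (parallel edges and loops are allowed). -/
structure Multigraph (V : Type) (E : Type) where
  ends : E → Sym2 V

namespace Multigraph

variable {V E : Type}

/-- Walks in a multigraph, recorded as the sequence of traversed edges. -/
inductive Walk (G : Multigraph V E) : V → V → Type
  | nil (v : V) : Walk G v v
  | cons {u v w : V} (e : E) (he : G.ends e = s(u, v)) (p : Walk G v w) : Walk G u w

/-- The list of edges traversed by a walk. -/
def Walk.edges {G : Multigraph V E} : ∀ {u v : V}, G.Walk u v → List E
  | _, _, .nil _ => []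
  | _, _, .cons e _ p => e :: p.edges

/-- The list of vertices visited by a walk, in order. -/
def Walk.support {G : Multigraph V E} : ∀ {u v : V}, G.Walk u v → List V
  | _, _, .nil v => [v]
  | u, _, .cons _ _ p => u :: p.support

/-- A path is a walk visiting no vertex twice. -/
def Walk.IsPath {G : Multigraph V E} {u v : V} (p : G.Walk u v) : Prop :=
  p.support.Nodup

/-- There exist `k` pairwise edge-disjoint `u`–`v` paths in `G`. -/
def HasEdgeDisjointPaths (G : Multigraph V E) (k : ℕ) (u v : V) : Prop :=
  ∃ f : Fin k → G.Walk u v, (∀ i, (f i).IsPath) ∧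
    ∀ i j, i ≠ j → ∀ e, e ∈ (f i).edges → e ∉ (f j).edges

/-- `G` is `k`-edge-connected: it has more than one vertex and any two distinct
vertices are joined by at least `k` pairwise edge-disjoint paths. -/
def EdgeConnected (G : Multigraph V E) (k : ℕ) : Prop :=
  (∃ u v : V, u ≠ v) ∧ ∀ u v : V, u ≠ v → G.HasEdgeDisjointPaths k u v

/-- Deletion of the edge `e₀`. -/
def deleteEdge (G : Multigraph V E) (e₀ : E) : Multigraph V {e : E // e ≠ e₀} :=
  ⟨fun e => G.ends e.1⟩

/-- `G` is an edge-minimal `k`-edge-connected multigraph. -/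
def EdgeMinimal (G : Multigraph V E) (k : ℕ) : Prop :=
  G.EdgeConnected k ∧ ∀ e₀ : E, ¬ (G.deleteEdge e₀).EdgeConnected k

/-- The unordered pair of endpoints of an edge, as a multiset. -/
def _root_.Sym2.toMset {α : Type*} : Sym2 α → Multiset α :=
  Sym2.lift ⟨fun a b => {a, b}, fun a b => Multiset.cons_swap a b 0⟩

open Classical in
/-- The degree of a vertex: the number of edge-endpoints at `v`, counting
parallel edges with multiplicity (and loops twice). -/
noncomputable def degree (G : Multigraph V E) [Fintype E] (v : V) : ℕ :=
  ∑ e : E, Multiset.count v (G.ends e).toMset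

/-- The relation `R^k`: `v₁ R^k v₂` iff `v₁ = v₂` or there are `k` pairwise
edge-disjoint paths between `v₁` and `v₂`. -/
def Rel (G : Multigraph V E) (k : ℕ) (v₁ v₂ : V) : Prop :=
  v₁ = v₂ ∨ G.HasEdgeDisjointPaths k v₁ v₂

/-- A multigraph has more than one vertex and exactly `k` pairwise edge-disjoint
paths (as a maximum) between any two distinct vertices. -/
def ExactlyEdgeConnected (G : Multigraph V E) (k : ℕ) : Prop :=
  (∃ u v : V, u ≠ v) ∧ ∀ u v : V, u ≠ v →
    G.HasEdgeDisjointPaths k u v ∧ ¬ G.HasEdgeDisjointPaths (k + 1) u v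

/-- The edge cut `⟨A, Aᶜ⟩`: all edges with one endpoint in `A` and the other
outside `A`. -/
def cutEdges (G : Multigraph V E) (A : Set V) : Set E :=
  {e : E | ∃ a b : V, G.ends e = s(a, b) ∧ a ∈ A ∧ b ∉ A}

/-- `⟨A, Aᶜ⟩` is a minimum edge cut of `G`: both sides are nonempty and no other
edge cut has fewer edges. -/
def IsMinCut (G : Multigraph V E) (A : Set V) : Prop :=
  A.Nonempty ∧ Aᶜ.Nonempty ∧ ∀ B : Set V, B.Nonempty → Bᶜ.Nonempty →
    (G.cutEdges A).ncard ≤ (G.cutEdges B).ncard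

open Classical in
/-- Vertex splitting: the multigraph on `A ∪ {x₁}` (with `x₁ = Sum.inr ()` a
new vertex) whose edges are the edges of `G` with both endpoints in `A`,
together with `k` new edges joining `x₁` to the vertices `u i` (the endpoints
in `A` of the cut edges). -/
noncomputable def splitGraph (G : Multigraph V E) (A : Set V) {k : ℕ}
    (u : Fin k → V) :
    Multigraph (↥A ⊕ Unit) ({e : E // ∀ x ∈ G.ends e, x ∈ A} ⊕ Fin k) :=
  ⟨fun e => match e with
    | .inl e' => (G.ends e'.1).map
        (fun x => if h : x ∈ A then Sum.inl ⟨x, h⟩ else Sum.inr ())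
    | .inr i => s(if h : u i ∈ A then Sum.inl ⟨u i, h⟩ else Sum.inr (), Sum.inr ())⟩

variable {V E : Type} {G : Multigraph V E}

lemma Walk.exists_suffix : ∀ {u y : V} (p : G.Walk u y) (x : V), x ∈ p.support →
    ∃ r : G.Walk x y, (∀ e ∈ r.edges, e ∈ p.edges) ∧ r.support.Sublist p.support
  | _, _, .nil v, x, hx => by
      simp only [Walk.support, List.mem_singleton] at hx; subst hx
      exact ⟨.nil _, by simp [Walk.edges], by simp [Walk.support]⟩
  | u, y, .cons e he q, x, hx => by
      rcases List.mem_cons.1 (by simpa [Walk.support] using hx) with h | h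
      · subst h
        exact ⟨.cons e he q, fun _ h => h, List.Sublist.refl _⟩
      · obtain ⟨r, hre, hrs⟩ := Walk.exists_suffix q x h
        refine ⟨r, fun e' h' => List.mem_cons_of_mem _ (hre e' h'), ?_⟩
        simp only [Walk.support]
        exact hrs.trans (List.sublist_cons_self _ _)

lemma Walk.exists_isPath : ∀ {x y : V} (p : G.Walk x y),
    ∃ q : G.Walk x y, q.IsPath ∧ ∀ e ∈ q.edges, e ∈ p.edges
  | _, _, .nil v => ⟨.nil v, by simp [Walk.IsPath, Walk.support], by simp⟩
  | x, y, .cons e he p => by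
      obtain ⟨q', hq', hq'e⟩ := p.exists_isPath
      by_cases hx : x ∈ q'.support
      · obtain ⟨r, hre, hrs⟩ := q'.exists_suffix x hx
        refine ⟨r, hrs.nodup hq', fun e' h' => List.mem_cons_of_mem _ (hq'e e' (hre e' h'))⟩
      · refine ⟨.cons e he q', ?_, ?_⟩
        · simpa [Walk.IsPath, Walk.support, hx] using hq'
        · intro e' h'
          rcases List.mem_cons.1 (by simpa [Walk.edges] using h') with h | h
          · simp [Walk.edges, h]
          · exact List.mem_cons_of_mem _ (hq'e e' h)

lemma Walk.exists_cutEdge {B : Set V} : ∀ {x y : V} (p : G.Walk x y), x ∈ B → y ∉ B →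
    ∃ e ∈ p.edges, e ∈ G.cutEdges B
  | _, _, .nil v, hx, hy => absurd hx hy
  | x, y, @Walk.cons _ _ _ _ v _ e he q, hx, hy => by
      by_cases hv : v ∈ B
      · obtain ⟨e', h₁, h₂⟩ := Walk.exists_cutEdge q hv hy
        exact ⟨e', List.mem_cons_of_mem _ h₁, h₂⟩
      · exact ⟨e, List.mem_cons_self, ⟨x, v, he, hx, hv⟩⟩

lemma le_ncard_of_hasEdgeDisjointPaths [Fintype E] {t : ℕ} {a b : V}
    (h : G.HasEdgeDisjointPaths t a b) {B : Set V} (ha : a ∈ B) (hb : b ∉ B) :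
    t ≤ (G.cutEdges B).ncard := by
  obtain ⟨p, _, hdisj⟩ := h
  choose g hg₁ hg₂ using fun i => (p i).exists_cutEdge ha hb
  have ginj : Function.Injective g := by
    intro i j hij
    by_contra hne
    have h1 : g j ∈ (p i).edges := hij ▸ hg₁ i
    exact hdisj j i (Ne.symm hne) (g j) (hg₁ j) h1
  have hsub : Set.range g ⊆ G.cutEdges B := by
    rintro _ ⟨i, rfl⟩; exact hg₂ i
  calc t = (Set.range g).ncard := by
        rw [← Set.image_univ, Set.ncard_image_of_injective _ ginj, Set.ncard_univ,
          Nat.card_eq_fintype_card, Fintype.card_fin]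
    _ ≤ (G.cutEdges B).ncard := Set.ncard_le_ncard hsub (Set.toFinite _)
section Flow
open scoped Classical
variable [Fintype E]

noncomputable def wt (o : Option (V × V)) (z : V) : ℤ :=
  match o with
  | none => 0
  | some (x, y) => (if z = x then 1 else 0) - (if z = y then 1 else 0)

noncomputable def phi (D : E → Option (V × V)) (z : V) : ℤ := ∑ e : E, wt (D e) z

def Consistent (G : Multigraph V E) (D : E → Option (V × V)) : Prop :=
  ∀ e x y, D e = some (x, y) → G.ends e = s(x, y)

lemma phi_update (D : E → Option (V × V)) (e : E) (o : Option (V × V)) (z : V) :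
    phi (Function.update D e o) z = phi D z - wt (D e) z + wt o z := by
  have h1 : ∑ e' : E, wt (Function.update D e o e') z
      = wt o z + ∑ e' ∈ Finset.univ.erase e, wt (D e') z := by
    rw [← Finset.add_sum_erase _ _ (Finset.mem_univ e)]
    congr 1
    · rw [Function.update_self]
    · exact Finset.sum_congr rfl fun e' he' => by
        rw [Function.update_of_ne (Finset.ne_of_mem_erase he')]
  have h2 : ∑ e' : E, wt (D e') z
      = wt (D e) z + ∑ e' ∈ Finset.univ.erase e, wt (D e') z :=
    (Finset.add_sum_erase _ _ (Finset.mem_univ e)).symm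
  unfold phi
  rw [h1, h2]
  ring

lemma exists_pos_out {D : E → Option (V × V)} {z : V} (h : 1 ≤ phi D z) :
    ∃ e y, D e = some (z, y) ∧ z ≠ y := by
  by_contra hc
  push_neg at hc
  have hle : ∀ e : E, wt (D e) z ≤ 0 := by
    intro e
    match hD : D e with
    | none => simp [wt]
    | some (x, y) =>
      by_cases hx : z = x
      · subst hx
        have hzy : z = y := hc e y hD
        subst hzy
        simp [wt]
      · by_cases hy : z = y
        · simp only [wt, if_neg hx, if_pos hy]; omega
        · simp only [wt, if_neg hx, if_neg hy]; omega
  have : phi D z ≤ 0 := Finset.sum_nonpos fun e _ => hle e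
  omega

/-- Properties of removing one oriented edge from an orientation. -/
lemma remove_props (G : Multigraph V E) {D : E → Option (V × V)} {e : E} {z y : V}
    (hcons : Consistent G D) (hey : D e = some (z, y)) :
    Consistent G (Function.update D e none) ∧
    (∀ x, phi (Function.update D e none) x
        = phi D x - (if x = z then 1 else 0) + (if x = y then 1 else 0)) ∧
    {e' : E | Function.update D e none e' ≠ none}.ncard + 1 ≤ {e' : E | D e' ≠ none}.ncard := by
  refine ⟨?_, ?_, ?_⟩
  · intro e' x' y' h'
    by_cases he' : e' = e
    · subst he'
      rw [Function.update_self] at h'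
      exact absurd h' (by simp)
    · rw [Function.update_of_ne he'] at h'
      exact hcons e' x' y' h'
  · intro x
    rw [phi_update]
    have : wt (D e) x = (if x = z then 1 else 0) - (if x = y then 1 else 0) := by
      rw [hey]; rfl
    rw [this]
    simp only [wt]
    ring
  · have hss : {e' : E | Function.update D e none e' ≠ none} ⊂ {e' : E | D e' ≠ none} := by
      constructor
      · intro e' he'
        simp only [Set.mem_setOf_eq] at he' ⊢
        by_cases h : e' = e
        · subst h; rw [Function.update_self] at he'; exact absurd rfl he'
        · rwa [Function.update_of_ne h] at he'
      · intro hsub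
        have h1 : e ∈ {e' : E | D e' ≠ none} := by simp [hey]
        have h2 : e ∉ {e' : E | Function.update D e none e' ≠ none} := by
          simp [Function.update_self]
        exact h2 (hsub h1)
    have := Set.ncard_lt_ncard hss (Set.toFinite _)
    omega

lemma extract (G : Multigraph V E) (b : V) : ∀ (n : ℕ) (D : E → Option (V × V)),
    {e : E | D e ≠ none}.ncard ≤ n →
    Consistent G D → (∀ x, x ≠ b → 0 ≤ phi D x) →
    ∀ z, z ≠ b → 1 ≤ phi D z →
    ∃ (p : G.Walk z b) (D' : E → Option (V × V)), Consistent G D' ∧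
      p.edges.Nodup ∧ (∀ e ∈ p.edges, D e ≠ none ∧ D' e = none) ∧
      (∀ e, e ∉ p.edges → D' e = D e) ∧
      (∀ x, phi D' x = phi D x - (if x = z then 1 else 0) + (if x = b then 1 else 0)) := by
  intro n
  induction n with
  | zero =>
    intro D hcard _ _ z hzb hz
    have hemp : {e : E | D e ≠ none} = ∅ := by
      rw [← Set.ncard_eq_zero (Set.toFinite _)]; omega
    have hD : ∀ e, D e = none := by
      intro e
      by_contra he
      rw [Set.eq_empty_iff_forall_notMem] at hemp
      exact hemp e he
    have : phi D z = 0 := by simp [phi, hD, wt]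
    omega
  | succ n ih =>
    intro D hcard hcons h0 z hzb hz
    obtain ⟨e, y, hey, hzy⟩ := exists_pos_out hz
    obtain ⟨hcons1, hphi1, hcard1⟩ := remove_props G hcons hey
    have hD₁e : Function.update D e none e = none := Function.update_self _ _ _
    have hused1 : {e' : E | Function.update D e none e' ≠ none}.ncard ≤ n := by omega
    by_cases hyb : y = b
    · subst hyb
      refine ⟨.cons e (hcons e z y hey) (.nil y), Function.update D e none, hcons1,
        by simp [Walk.edges], ?_, ?_, ?_⟩
      · intro e' he'
        simp only [Walk.edges, List.mem_cons, List.not_mem_nil, or_false] at he'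
        subst he'
        exact ⟨by simp [hey], hD₁e⟩
      · intro e' he'
        simp only [Walk.edges, List.mem_cons, List.not_mem_nil, or_false] at he'
        rw [Function.update_of_ne he']
      · exact hphi1
    · have h01 : ∀ x, x ≠ b → 0 ≤ phi (Function.update D e none) x := by
        intro x hxb
        rw [hphi1 x]
        have hx0 := h0 x hxb
        by_cases hxz : x = z
        · subst hxz
          rw [if_pos rfl, if_neg hzy]
          omega
        · by_cases hxy : x = y
          · rw [if_neg hxz, if_pos hxy]; omega
          · rw [if_neg hxz, if_neg hxy]; omega
      have hy1 : 1 ≤ phi (Function.update D e none) y := by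
        rw [hphi1 y, if_neg (Ne.symm hzy), if_pos rfl]
        have := h0 y hyb
        omega
      obtain ⟨p', D', hcons', hnd', hp'1, hp'2, hphi'⟩ :=
        ih (Function.update D e none) hused1 hcons1 h01 y hyb hy1
      have henotin : e ∉ p'.edges := by
        intro hmem
        exact (hp'1 e hmem).1 hD₁e
      refine ⟨.cons e (hcons e z y hey) p', D', hcons', ?_, ?_, ?_, ?_⟩
      · simpa [Walk.edges, henotin] using hnd'
      · intro e' he'
        rcases List.mem_cons.1 (by simpa [Walk.edges] using he') with h | h
        · exact h ▸ ⟨by simp [hey], (hp'2 e henotin).trans hD₁e⟩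
        · have h2 := hp'1 e' h
          refine ⟨?_, h2.2⟩
          intro hDnone
          have he'e : e' ≠ e := by rintro rfl; rw [hey] at hDnone; exact nomatch hDnone
          rw [Function.update_of_ne he'e] at h2
          exact h2.1 hDnone
      · intro e' he'
        simp only [Walk.edges, List.mem_cons, not_or] at he'
        rw [hp'2 e' he'.2, Function.update_of_ne he'.1]
      · intro x
        rw [hphi' x, hphi1 x]
        ring

end Flow
section Decomp
open scoped Classical
variable [Fintype E]

lemma flow_decomp (G : Multigraph V E) (a b : V) (hab : a ≠ b) :
    ∀ (s : ℕ) (D : E → Option (V × V)), Consistent G D →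
    (∀ z, phi D z = if z = a then (s : ℤ) else if z = b then -(s : ℤ) else 0) →
    ∃ ps : List (G.Walk a b), ps.length = s ∧
      (∀ p ∈ ps, ∀ e ∈ p.edges, D e ≠ none) ∧
      ps.Pairwise (fun p q => ∀ e ∈ p.edges, e ∉ q.edges) := by
  intro s
  induction s with
  | zero => intro D _ _; exact ⟨[], rfl, by simp, by simp⟩
  | succ s ih =>
    intro D hcons hphi
    have h0 : ∀ x, x ≠ b → 0 ≤ phi D x := by
      intro x hxb
      rw [hphi x]
      split_ifs <;> omega
    have ha1 : 1 ≤ phi D a := by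
      rw [hphi a, if_pos rfl]
      push_cast
      omega
    obtain ⟨p, D', hcons', hnd, hp1, hp2, hphi'⟩ :=
      extract G b ({e : E | D e ≠ none}.ncard) D le_rfl hcons h0 a hab ha1
    have hphi'' : ∀ z, phi D' z = if z = a then (s : ℤ) else if z = b then -(s : ℤ) else 0 := by
      intro z
      rw [hphi' z, hphi z]
      by_cases hza : z = a
      · subst hza
        simp only [if_pos rfl, if_neg hab]
        push_cast; ring
      · by_cases hzb : z = b
        · subst hzb
          simp only [if_neg hza, if_pos rfl]
          push_cast; ring
        · simp only [if_neg hza, if_neg hzb]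
          ring
    obtain ⟨ps, hlen, hused, hpw⟩ := ih D' hcons' hphi''
    have hpd : ∀ q ∈ ps, ∀ e ∈ p.edges, e ∉ q.edges := by
      intro q hq e he hcontra
      exact hused q hq e hcontra (hp1 e he).2
    refine ⟨p :: ps, by simp [hlen], ?_, ?_⟩
    · intro q hq e he
      rcases List.mem_cons.1 hq with rfl | hq'
      · exact (hp1 e he).1
      · intro hDe
        by_cases hep : e ∈ p.edges
        · exact hused q hq' e he (hp1 e hep).2
        · exact hused q hq' e he ((hp2 e hep).trans hDe)
    · exact List.pairwise_cons.2 ⟨hpd, hpw⟩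

lemma hasEdgeDisjointPaths_of_flow (G : Multigraph V E) {a b : V} (hab : a ≠ b) (t : ℕ)
    (D : E → Option (V × V)) (hcons : Consistent G D)
    (hphi : ∀ z, phi D z = if z = a then (t : ℤ) else if z = b then -(t : ℤ) else 0) :
    G.HasEdgeDisjointPaths t a b := by
  obtain ⟨ps, hlen, _, hpw⟩ := flow_decomp G a b hab t D hcons hphi
  choose q hq1 hq2 using fun (p : G.Walk a b) => p.exists_isPath
  have hget := List.pairwise_iff_get.1 hpw
  refine ⟨fun i => q (ps.get (Fin.cast hlen.symm i)), fun i => hq1 _, ?_⟩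
  intro i j hij e hei hej
  have h1 := hq2 _ e hei
  have h2 := hq2 _ e hej
  rcases lt_or_gt_of_ne hij with hlt | hlt
  · exact hget (Fin.cast hlen.symm i) (Fin.cast hlen.symm j) (by simpa using hlt) e h1 h2
  · exact hget (Fin.cast hlen.symm j) (Fin.cast hlen.symm i) (by simpa using hlt) e h2 h1

end Decomp
section Aug
open scoped Classical
variable [Fintype E]

/-- Residual step relation. -/
def Step (G : Multigraph V E) (D : E → Option (V × V)) (x y : V) : Prop :=
  (∃ e, D e = none ∧ G.ends e = s(x, y)) ∨ (∃ e, D e = some (y, x))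

lemma chain_imp_mem {R R' : V → V → Prop} :
    ∀ (l : List V) (y : V), List.Chain R y l →
      (∀ p q, p ∈ y :: l → q ∈ l → R p q → R' p q) → List.Chain R' y l
  | [], _, _, _ => List.Chain.nil
  | q :: l, y, h, himp => by
      rcases List.chain_cons.1 h with ⟨h1, h2⟩
      refine List.chain_cons.2 ⟨himp y q (by simp) (by simp) h1, ?_⟩
      exact chain_imp_mem l q h2 fun p q' hp hq' hr =>
        himp p q' (List.mem_cons_of_mem _ hp) (List.mem_cons_of_mem _ hq') hr

lemma aug_chain (G : Multigraph V E) (b : V) :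
    ∀ (l : List V) (D : E → Option (V × V)) (z : V), Consistent G D →
    List.Chain (Step G D) z l → (z :: l).Nodup → (z :: l).getLast? = some b →
    ∃ D', Consistent G D' ∧ ∀ x, phi D' x
        = phi D x + (if x = z then 1 else 0) - (if x = b then 1 else 0) := by
  intro l
  induction l with
  | nil =>
    intro D z hcons _ _ hlast
    have hzb : z = b := by simpa using hlast
    subst hzb
    exact ⟨D, hcons, fun x => by ring⟩
  | cons y l' ih =>
    intro D z hcons hchain hnodup hlast
    obtain ⟨hstep, hchain'⟩ := List.chain_cons.1 hchain
    have hznotin : z ∉ y :: l' := (List.nodup_cons.1 hnodup).1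
    have hnodup' : (y :: l').Nodup := (List.nodup_cons.1 hnodup).2
    have hlast' : (y :: l').getLast? = some b := by
      rw [List.getLast?_cons_cons] at hlast
      exact hlast
    -- construct the one-step flip D₁
    have main : ∃ D₁, Consistent G D₁ ∧
        (∀ x, phi D₁ x = phi D x + (if x = z then 1 else 0) - (if x = y then 1 else 0)) ∧
        (∀ p q, p ≠ z → q ≠ z → Step G D p q → Step G D₁ p q) := by
      rcases hstep with ⟨e, hDe, hends⟩ | ⟨e, hDe⟩
      · refine ⟨Function.update D e (some (z, y)), ?_, ?_, ?_⟩
        · intro e' x' y' h'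
          by_cases he' : e' = e
          · subst he'
            rw [Function.update_self] at h'
            obtain ⟨rfl, rfl⟩ : z = x' ∧ y = y' := by
              simpa using h'
            exact hends
          · rw [Function.update_of_ne he'] at h'
            exact hcons e' x' y' h'
        · intro x
          rw [phi_update, hDe]
          simp only [wt]
          ring
        · intro p q hp hq hstep'
          rcases hstep' with ⟨e', hDe', hends'⟩ | ⟨e', hDe'⟩
          · have he'e : e' ≠ e := by
              rintro rfl
              rw [hends] at hends'
              rcases Sym2.eq_iff.1 hends' with ⟨rfl, rfl⟩ | ⟨rfl, rfl⟩
              · exact hp rfl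
              · exact hq rfl
            exact Or.inl ⟨e', by rw [Function.update_of_ne he'e]; exact hDe', hends'⟩
          · have he'e : e' ≠ e := by
              rintro rfl
              rw [hDe] at hDe'
              exact nomatch hDe'
            exact Or.inr ⟨e', by rw [Function.update_of_ne he'e]; exact hDe'⟩
      · refine ⟨Function.update D e none, ?_, ?_, ?_⟩
        · intro e' x' y' h'
          by_cases he' : e' = e
          · subst he'
            rw [Function.update_self] at h'
            exact absurd h' (by simp)
          · rw [Function.update_of_ne he'] at h'
            exact hcons e' x' y' h'
        · intro x
          rw [phi_update, hDe]
          simp only [wt]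
          ring
        · intro p q hp hq hstep'
          rcases hstep' with ⟨e', hDe', hends'⟩ | ⟨e', hDe'⟩
          · have he'e : e' ≠ e := by
              rintro rfl
              rw [hDe] at hDe'
              exact nomatch hDe'
            exact Or.inl ⟨e', by rw [Function.update_of_ne he'e]; exact hDe', hends'⟩
          · by_cases he'e : e' = e
            · subst he'e
              rw [hDe] at hDe'
              obtain ⟨rfl, rfl⟩ : y = q ∧ z = p := by simpa using hDe'
              exact absurd rfl hp
            · exact Or.inr ⟨e', by rw [Function.update_of_ne he'e]; exact hDe'⟩
    obtain ⟨D₁, hcons₁, hphi₁, hpres⟩ := main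
    have hchain₁ : List.Chain (Step G D₁) y l' := by
      refine chain_imp_mem l' y hchain' fun p q hp hq hr => ?_
      exact hpres p q (fun h => hznotin (h ▸ hp)) (fun h => hznotin (h ▸ List.mem_cons_of_mem _ hq)) hr
    obtain ⟨D', hcons', hphi'⟩ := ih D₁ y hcons₁ hchain₁ hnodup' hlast'
    refine ⟨D', hcons', fun x => ?_⟩
    rw [hphi' x, hphi₁ x]
    ring

end Aug
section Aug2
open scoped Classical
variable [Fintype E]

lemma dup_split {α : Type*} : ∀ (l : List α), ¬ l.Nodup →
    ∃ (x : α) (s₁ s₂ s₃ : List α), l = s₁ ++ x :: (s₂ ++ x :: s₃)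
  | [], h => absurd List.nodup_nil h
  | c :: t, h => by
      by_cases hc : c ∈ t
      · obtain ⟨t₁, t₂, rfl⟩ := List.append_of_mem hc
        exact ⟨c, [], t₁, t₂, by simp⟩
      · have ht : ¬ t.Nodup := fun hn => h (List.nodup_cons.2 ⟨hc, hn⟩)
        obtain ⟨x, s₁, s₂, s₃, rfl⟩ := dup_split t ht
        exact ⟨x, c :: s₁, s₂, s₃, by simp⟩

lemma getLast?_append_cons {α : Type*} (l s : List α) (x : α) :
    (l ++ x :: s).getLast? = (x :: s).getLast? := by
  rw [List.getLast?_append, List.getLast?_eq_getLast (l := x :: s) (by simp)]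
  rfl

lemma chain_shortcut {R : V → V → Prop} {a b : V} (l : List V)
    (hc : List.Chain R a l) (hl : (a :: l).getLast? = some b) (hnd : ¬ (a :: l).Nodup) :
    ∃ l', l'.length < l.length ∧ List.Chain R a l' ∧ (a :: l').getLast? = some b := by
  by_cases ha : a ∈ l
  · obtain ⟨l₁, l₂, rfl⟩ := List.append_of_mem ha
    refine ⟨l₂, by simp; omega, (List.isChain_cons_split.1 hc).2, ?_⟩
    have h0 : a :: (l₁ ++ a :: l₂) = (a :: l₁) ++ (a :: l₂) := by simp
    rw [h0, getLast?_append_cons] at hl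
    exact hl
  · have hnd' : ¬ l.Nodup := fun hn => hnd (List.nodup_cons.2 ⟨ha, hn⟩)
    obtain ⟨x, s₁, s₂, s₃, rfl⟩ := dup_split l hnd'
    have hc1 : List.Chain R a (s₁ ++ [x]) := (List.isChain_cons_split.1 hc).1
    have hc2 : List.Chain R x (s₂ ++ x :: s₃) := (List.isChain_cons_split.1 hc).2
    have hc3 : List.Chain R x s₃ := (List.isChain_cons_split.1 hc2).2
    refine ⟨s₁ ++ x :: s₃, by simp, List.isChain_cons_split.2 ⟨hc1, hc3⟩, ?_⟩
    have h1 : a :: (s₁ ++ x :: (s₂ ++ x :: s₃)) = (a :: s₁ ++ x :: s₂) ++ (x :: s₃) := by simp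
    have h2 : a :: (s₁ ++ x :: s₃) = (a :: s₁) ++ (x :: s₃) := by simp
    rw [h1, getLast?_append_cons] at hl
    rw [h2, getLast?_append_cons]
    exact hl

lemma exists_nodup_chain_aux {R : V → V → Prop} {a b : V} :
    ∀ (n : ℕ) (l : List V), l.length ≤ n → List.Chain R a l → (a :: l).getLast? = some b →
    ∃ l', List.Chain R a l' ∧ (a :: l').getLast? = some b ∧ (a :: l').Nodup := by
  intro n
  induction n with
  | zero =>
    intro l hlen hc hl
    have : l = [] := List.eq_nil_of_length_eq_zero (Nat.le_zero.1 hlen)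
    subst this
    exact ⟨[], hc, hl, by simp⟩
  | succ n ih =>
    intro l hlen hc hl
    by_cases hnd : (a :: l).Nodup
    · exact ⟨l, hc, hl, hnd⟩
    · obtain ⟨l', hlt, hc', hl'⟩ := chain_shortcut l hc hl hnd
      exact ih l' (by omega) hc' hl'

lemma exists_nodup_chain {R : V → V → Prop} {a b : V} (h : Relation.ReflTransGen R a b) :
    ∃ l, List.Chain R a l ∧ (a :: l).getLast? = some b ∧ (a :: l).Nodup := by
  obtain ⟨l0, hc0, hl0⟩ := List.exists_isChain_cons_of_relationReflTransGen h
  refine exists_nodup_chain_aux l0.length l0 le_rfl hc0 ?_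
  rw [List.getLast?_eq_getLast (l := a :: l0) (by simp), hl0]

lemma cut_bound [Fintype V] (G : Multigraph V E) {D : E → Option (V × V)} {a b : V} {s : ℤ}
    (hab : a ≠ b) (hcons : Consistent G D)
    (hphi : ∀ z, phi D z = if z = a then s else if z = b then -s else 0)
    (hb : ¬ Relation.ReflTransGen (Step G D) a b) :
    ((G.cutEdges {x | Relation.ReflTransGen (Step G D) a x}).ncard : ℤ) ≤ s := by
  set R : Set V := {x | Relation.ReflTransGen (Step G D) a x} with hR
  have haR : a ∈ R := Relation.ReflTransGen.refl
  have hbR : b ∉ R := hb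
  have key2 : ∀ e x y, D e = some (x, y) → y ∈ R → x ∈ R := by
    intro e x y hD hy
    exact Relation.ReflTransGen.tail hy (Or.inr ⟨e, hD⟩)
  have key3 : ∀ e x y, D e = none → G.ends e = s(x, y) → x ∈ R → y ∈ R := by
    intro e x y hD hends hx
    exact Relation.ReflTransGen.tail hx (Or.inl ⟨e, hD, hends⟩)
  have hsum : ∑ z ∈ R.toFinset, phi D z = s := by
    rw [Finset.sum_eq_single_of_mem a (Set.mem_toFinset.2 haR)]
    · rw [hphi a, if_pos rfl]
    · intro z hz hza
      have hzb : z ≠ b := fun h => hbR (h ▸ Set.mem_toFinset.1 hz)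
      rw [hphi z, if_neg hza, if_neg hzb]
  have hswap : ∑ z ∈ R.toFinset, phi D z = ∑ e : E, ∑ z ∈ R.toFinset, wt (D e) z := by
    unfold phi
    rw [Finset.sum_comm]
  have hinner : ∀ e : E, (if e ∈ G.cutEdges R then (1 : ℤ) else 0) ≤ ∑ z ∈ R.toFinset, wt (D e) z := by
    intro e
    match hD : D e with
    | none =>
      have hnc : e ∉ G.cutEdges R := by
        rintro ⟨p, q, hends, hp, hq⟩
        exact hq (key3 e p q hD hends hp)
      simp [hnc, wt]
    | some (x, y) =>
      have hends : G.ends e = s(x, y) := hcons e x y hD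
      have hval : ∑ z ∈ R.toFinset, wt (some (x, y) : Option (V × V)) z
          = (if x ∈ R.toFinset then (1 : ℤ) else 0) - (if y ∈ R.toFinset then (1 : ℤ) else 0) := by
        simp only [wt]
        rw [Finset.sum_sub_distrib, Finset.sum_ite_eq' R.toFinset x (fun _ => (1 : ℤ)),
          Finset.sum_ite_eq' R.toFinset y (fun _ => (1 : ℤ))]
      rw [hval]
      by_cases hx : x ∈ R
      · by_cases hy : y ∈ R
        · have hnc : e ∉ G.cutEdges R := by
            rintro ⟨p, q, hends', hp, hq⟩
            rw [hends] at hends'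
            rcases Sym2.eq_iff.1 hends' with ⟨rfl, rfl⟩ | ⟨rfl, rfl⟩
            · exact hq hy
            · exact hq hx
          simp [hnc, hx, hy]
        · simp only [Set.mem_toFinset, hx, hy, if_true, if_false]
          split_ifs <;> omega
      · have hy : y ∉ R := fun hy => hx (key2 e x y hD hy)
        have hnc : e ∉ G.cutEdges R := by
          rintro ⟨p, q, hends', hp, hq⟩
          rw [hends] at hends'
          rcases Sym2.eq_iff.1 hends' with ⟨rfl, rfl⟩ | ⟨rfl, rfl⟩
          · exact hx hp
          · exact hy hp
        simp [hnc, hx, hy]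
  have hcount : ∑ e : E, (if e ∈ G.cutEdges R then (1 : ℤ) else 0)
      = ((G.cutEdges R).ncard : ℤ) := by
    rw [Set.ncard_eq_toFinset_card']
    have hfe : (G.cutEdges R).toFinset = Finset.univ.filter (fun e => e ∈ G.cutEdges R) := by
      ext e; simp
    rw [hfe, Finset.card_filter]
    push_cast
    rfl
  calc ((G.cutEdges R).ncard : ℤ) = ∑ e : E, (if e ∈ G.cutEdges R then (1 : ℤ) else 0) :=
        hcount.symm
    _ ≤ ∑ e : E, ∑ z ∈ R.toFinset, wt (D e) z := Finset.sum_le_sum fun e _ => hinner e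
    _ = s := by rw [← hswap, hsum]

lemma hasEdgeDisjointPaths_of_cuts [Fintype V] (G : Multigraph V E) {a b : V} (hab : a ≠ b)
    (t : ℕ) (hcut : ∀ B : Set V, a ∈ B → b ∉ B → t ≤ (G.cutEdges B).ncard) :
    G.HasEdgeDisjointPaths t a b := by
  have hflow : ∀ s : ℕ, s ≤ t → ∃ D, Consistent G D ∧
      (∀ z, phi D z = if z = a then (s : ℤ) else if z = b then -(s : ℤ) else 0) := by
    intro s
    induction s with
    | zero =>
      intro _
      exact ⟨fun _ => none, fun e x y h => absurd h (by simp), fun z => by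
        rw [phi]; simp [wt]⟩
    | succ s ih =>
      intro hst
      obtain ⟨D, hcons, hphi⟩ := ih (by omega)
      by_cases hreach : Relation.ReflTransGen (Step G D) a b
      · obtain ⟨l, hc, hl, hnd⟩ := exists_nodup_chain hreach
        obtain ⟨D', hcons', hphi'⟩ := aug_chain G b l D a hcons hc hnd hl
        refine ⟨D', hcons', fun z => ?_⟩
        rw [hphi' z, hphi z]
        by_cases hza : z = a
        · subst hza
          simp only [if_pos rfl, if_neg hab]
          push_cast; ring
        · by_cases hzb : z = b
          · subst hzb
            simp only [if_neg hza, if_pos rfl]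
            push_cast; ring
          · simp only [if_neg hza, if_neg hzb]
            ring
      · exfalso
        have h1 := cut_bound G hab hcons hphi hreach
        have h2 := hcut {x | Relation.ReflTransGen (Step G D) a x}
          Relation.ReflTransGen.refl hreach
        omega
  obtain ⟨D, hcons, hphi⟩ := hflow t le_rfl
  exact hasEdgeDisjointPaths_of_flow G hab t D hcons hphi

end Aug2
section Cuts
open scoped Classical

lemma _root_.Sym2.exists_eq_mk {α : Type*} (z : Sym2 α) : ∃ x y, z = s(x, y) := by
  induction z using Sym2.ind with
  | _ x y => exact ⟨x, y, rfl⟩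

lemma mem_cutEdges_iff (G : Multigraph V E) {e : E} {B : Set V} {p q : V}
    (h : G.ends e = s(p, q)) :
    e ∈ G.cutEdges B ↔ (p ∈ B ∧ q ∉ B) ∨ (q ∈ B ∧ p ∉ B) := by
  constructor
  · rintro ⟨x, y, hxy, hx, hy⟩
    rcases Sym2.eq_iff.1 (h.symm.trans hxy) with ⟨rfl, rfl⟩ | ⟨rfl, rfl⟩
    · exact Or.inl ⟨hx, hy⟩
    · exact Or.inr ⟨hx, hy⟩
  · rintro (⟨hp, hq⟩ | ⟨hq, hp⟩)
    · exact ⟨p, q, h, hp, hq⟩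
    · exact ⟨q, p, h.trans Sym2.eq_swap, hq, hp⟩

lemma cutEdges_compl (G : Multigraph V E) (B : Set V) : G.cutEdges Bᶜ = G.cutEdges B := by
  ext e
  constructor
  · rintro ⟨x, y, hxy, hx, hy⟩
    exact ⟨y, x, hxy.trans Sym2.eq_swap, by simpa using hy, by simpa using hx⟩
  · rintro ⟨x, y, hxy, hx, hy⟩
    exact ⟨y, x, hxy.trans Sym2.eq_swap, by simpa using hy, by simpa using hx⟩

lemma ncard_eq_sum [Fintype E] (G : Multigraph V E) (B : Set V) :
    (G.cutEdges B).ncard = ∑ e : E, (if e ∈ G.cutEdges B then 1 else 0) := by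
  classical
  rw [Set.ncard_eq_toFinset_card']
  have hfe : (G.cutEdges B).toFinset = Finset.univ.filter (fun e => e ∈ G.cutEdges B) := by
    ext e; simp
  rw [hfe, Finset.card_filter]

lemma cutEdges_submod [Fintype E] (G : Multigraph V E) (X Y : Set V) :
    (G.cutEdges (X ∩ Y)).ncard + (G.cutEdges (X ∪ Y)).ncard
      ≤ (G.cutEdges X).ncard + (G.cutEdges Y).ncard := by
  classical
  rw [ncard_eq_sum, ncard_eq_sum, ncard_eq_sum, ncard_eq_sum,
    ← Finset.sum_add_distrib, ← Finset.sum_add_distrib]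
  apply Finset.sum_le_sum
  intro e _
  obtain ⟨p, q, h⟩ := Sym2.exists_eq_mk (G.ends e)
  simp only [mem_cutEdges_iff G h, Set.mem_inter_iff, Set.mem_union]
  by_cases hpX : p ∈ X <;> by_cases hpY : p ∈ Y <;> by_cases hqX : q ∈ X <;>
    by_cases hqY : q ∈ Y <;> simp [hpX, hpY, hqX, hqY]

lemma ncard_range_of_injective {α : Type*} {k : ℕ} (f : Fin k → α) [Fintype α]
    (hinj : Function.Injective f) : (Set.range f).ncard = k := by
  rw [← Set.image_univ, Set.ncard_image_of_injective _ hinj, Set.ncard_univ,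
    Nat.card_eq_fintype_card, Fintype.card_fin]

end Cuts
section Split
variable {A : Set V} {k : ℕ} {u v : Fin k → V} {f : Fin k → E}

def liftSet (A : Set V) (C : Set V) : Set (↥A ⊕ Unit) := Sum.inl '' {a : ↥A | a.1 ∈ C}

lemma mem_liftSet {C : Set V} {a : ↥A} : Sum.inl a ∈ liftSet A C ↔ a.1 ∈ C := by
  constructor
  · rintro ⟨a', ha', heq⟩
    obtain rfl := Sum.inl_injective heq
    exact ha'
  · intro h; exact ⟨a, h, rfl⟩

lemma inr_not_mem_liftSet {C : Set V} : Sum.inr () ∉ liftSet A C := by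
  rintro ⟨a', _, heq⟩; exact nomatch heq

lemma splitGraph_ends_inl {G : Multigraph V E} (u : Fin k → V)
    (e' : {e : E // ∀ x ∈ G.ends e, x ∈ A})
    {p q : V} (h : G.ends e'.1 = s(p, q)) (hp : p ∈ A) (hq : q ∈ A) :
    (G.splitGraph A u).ends (Sum.inl e') = s(Sum.inl ⟨p, hp⟩, Sum.inl ⟨q, hq⟩) := by
  show (G.ends e'.1).map _ = _
  rw [h, Sym2.map_pair_eq, dif_pos hp, dif_pos hq]

open Classical in
lemma splitGraph_ends_inr {G : Multigraph V E} {u : Fin k → V} (hu : ∀ i, u i ∈ A) (i : Fin k) :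
    (G.splitGraph A u).ends (Sum.inr i) = s(Sum.inl ⟨u i, hu i⟩, Sum.inr ()) := by
  show s(if h : u i ∈ A then (Sum.inl ⟨u i, h⟩ : ↥A ⊕ Unit) else Sum.inr (), Sum.inr ()) = _
  rw [dif_pos (hu i)]

lemma split_cut_ncard [Fintype E] {G : Multigraph V E}
    (hinj : Function.Injective f) (hrange : Set.range f = G.cutEdges A)
    (hends : ∀ i, G.ends (f i) = s(u i, v i)) (hu : ∀ i, u i ∈ A) (hv : ∀ i, v i ∉ A)
    {C : Set V} (hC : C ⊆ A) :
    ((G.splitGraph A u).cutEdges (liftSet A C)).ncard = (G.cutEdges C).ncard := by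
  classical
  set Φ : ({e : E // ∀ x ∈ G.ends e, x ∈ A} ⊕ Fin k) → E := Sum.elim (fun e' => e'.1) f with hΦ
  have hΦinj : Function.Injective Φ := by
    rintro (e₁ | i₁) (e₂ | i₂) h
    · exact congrArg Sum.inl (Subtype.ext h)
    · exfalso
      have hvi : v i₂ ∈ G.ends (f i₂) := by rw [hends i₂]; exact Sym2.mem_mk_right _ _
      rw [show f i₂ = e₁.1 from h.symm] at hvi
      exact hv i₂ (e₁.2 _ hvi)
    · exfalso
      have hvi : v i₁ ∈ G.ends (f i₁) := by rw [hends i₁]; exact Sym2.mem_mk_right _ _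
      rw [show f i₁ = e₂.1 from h] at hvi
      exact hv i₁ (e₂.2 _ hvi)
    · exact congrArg Sum.inr (hinj h)
  have hmem_inl : ∀ (e' : {e : E // ∀ x ∈ G.ends e, x ∈ A}),
      (Sum.inl e' ∈ (G.splitGraph A u).cutEdges (liftSet A C) ↔ e'.1 ∈ G.cutEdges C) := by
    intro e'
    obtain ⟨p, q, h⟩ := Sym2.exists_eq_mk (G.ends e'.1)
    have hp : p ∈ A := e'.2 p (by rw [h]; exact Sym2.mem_mk_left _ _)
    have hq : q ∈ A := e'.2 q (by rw [h]; exact Sym2.mem_mk_right _ _)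
    rw [mem_cutEdges_iff _ (splitGraph_ends_inl u e' h hp hq), mem_cutEdges_iff G h]
    simp [mem_liftSet]
  have hmem_inr : ∀ i : Fin k,
      (Sum.inr i ∈ (G.splitGraph A u).cutEdges (liftSet A C) ↔ u i ∈ C) := by
    intro i
    rw [mem_cutEdges_iff _ (splitGraph_ends_inr hu i)]
    simp [mem_liftSet, inr_not_mem_liftSet]
  have hmem_inr' : ∀ i : Fin k, (f i ∈ G.cutEdges C ↔ u i ∈ C) := by
    intro i
    rw [mem_cutEdges_iff G (hends i)]
    have : v i ∉ C := fun h => hv i (hC h)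
    tauto
  have himg : Φ '' ((G.splitGraph A u).cutEdges (liftSet A C)) = G.cutEdges C := by
    ext e
    constructor
    · rintro ⟨(e' | i), hmem, rfl⟩
      · exact (hmem_inl e').1 hmem
      · exact (hmem_inr' i).2 ((hmem_inr i).1 hmem)
    · intro he
      obtain ⟨p, q, h, hpC, hqC⟩ := he
      by_cases ball : ∀ x ∈ G.ends e, x ∈ A
      · exact ⟨Sum.inl ⟨e, ball⟩, (hmem_inl ⟨e, ball⟩).2 ⟨p, q, h, hpC, hqC⟩, rfl⟩
      · have hqA : q ∉ A := by
          intro hqA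
          apply ball
          intro x hx
          rw [h] at hx
          rcases Sym2.mem_iff.1 hx with rfl | rfl
          · exact hC hpC
          · exact hqA
        have heA : e ∈ G.cutEdges A := ⟨p, q, h, hC hpC, hqA⟩
        rw [← hrange] at heA
        obtain ⟨i, rfl⟩ := heA
        have huip : u i = p := by
          rcases Sym2.eq_iff.1 ((hends i).symm.trans h) with ⟨h1, _⟩ | ⟨h1, _⟩
          · exact h1
          · exact absurd (h1 ▸ hu i) hqA
        exact ⟨Sum.inr i, (hmem_inr i).2 (huip ▸ hpC), rfl⟩
  rw [← himg, Set.ncard_image_of_injective _ hΦinj]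

end Split
section Main
open scoped Classical
variable [Fintype V] [Fintype E]

lemma split_one {G : Multigraph V E} {k : ℕ} (hG : G.ExactlyEdgeConnected k) {A : Set V}
    (hA₁ : A.Nonempty) (hA₂ : Aᶜ.Nonempty) {u v : Fin k → V} {f : Fin k → E}
    (hinj : Function.Injective f) (hrange : Set.range f = G.cutEdges A)
    (hends : ∀ i, G.ends (f i) = s(u i, v i))
    (hu : ∀ i, u i ∈ A) (hv : ∀ i, v i ∉ A) :
    (G.splitGraph A u).ExactlyEdgeConnected k := by
  have F1 : ∀ C : Set V, C.Nonempty → Cᶜ.Nonempty → k ≤ (G.cutEdges C).ncard := by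
    rintro C ⟨x, hx⟩ ⟨y, hy⟩
    have hxy : x ≠ y := fun h => hy (h ▸ hx)
    exact le_ncard_of_hasEdgeDisjointPaths (hG.2 x y hxy).1 hx hy
  have F0 : (G.cutEdges A).ncard = k := by
    rw [← hrange]; exact ncard_range_of_injective f hinj
  have hcorr : ∀ C : Set V, C ⊆ A →
      ((G.splitGraph A u).cutEdges (liftSet A C)).ncard = (G.cutEdges C).ncard :=
    fun C hC => split_cut_ncard hinj hrange hends hu hv hC
  have allcuts : ∀ B₁ : Set (↥A ⊕ Unit), B₁.Nonempty → B₁ᶜ.Nonempty →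
      k ≤ ((G.splitGraph A u).cutEdges B₁).ncard := by
    have main : ∀ B₁ : Set (↥A ⊕ Unit), B₁.Nonempty → Sum.inr () ∉ B₁ →
        k ≤ ((G.splitGraph A u).cutEdges B₁).ncard := by
      rintro B₁ ⟨x₀, hx₀⟩ hinr
      set C : Set V := {x : V | ∃ h : x ∈ A, Sum.inl ⟨x, h⟩ ∈ B₁} with hCdef
      have hCA : C ⊆ A := fun x hx => hx.1
      have hlift : liftSet A C = B₁ := by
        ext x
        cases x with
        | inl a =>
          rw [mem_liftSet]
          constructor
          · rintro ⟨h, hmem⟩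
            rwa [Subtype.coe_eta] at hmem
          · intro h
            exact ⟨a.2, by rwa [Subtype.coe_eta]⟩
        | inr un =>
          cases un
          exact iff_of_false inr_not_mem_liftSet hinr
      have hCne : C.Nonempty := by
        cases x₀ with
        | inl a => exact ⟨a.1, a.2, by rwa [Subtype.coe_eta]⟩
        | inr un => cases un; exact absurd hx₀ hinr
      have hCcne : Cᶜ.Nonempty := by
        obtain ⟨y, hy⟩ := hA₂
        exact ⟨y, fun hyC => hy (hCA hyC)⟩
      have := F1 C hCne hCcne
      rwa [← hcorr C hCA, hlift] at this
    intro B₁ hne hnec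
    by_cases hinr : Sum.inr () ∈ B₁
    · have := main B₁ᶜ hnec (by simp [hinr])
      rwa [cutEdges_compl] at this
    · exact main B₁ hne hinr
  have noK : ∀ (B₁ : Set (↥A ⊕ Unit)) (a₁ b₁ : ↥A ⊕ Unit), a₁ ∈ B₁ → b₁ ∉ B₁ →
      ((G.splitGraph A u).cutEdges B₁).ncard ≤ k →
      ¬ (G.splitGraph A u).HasEdgeDisjointPaths (k + 1) a₁ b₁ := by
    intro B₁ a₁ b₁ hmem hnmem hle h
    have := le_ncard_of_hasEdgeDisjointPaths h hmem hnmem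
    omega
  obtain ⟨x, hx⟩ := hA₁
  refine ⟨⟨Sum.inl ⟨x, hx⟩, Sum.inr (), by simp⟩, ?_⟩
  intro a₁ b₁ hne
  constructor
  · exact hasEdgeDisjointPaths_of_cuts _ hne k
      (fun B hmem hnmem => allcuts B ⟨a₁, hmem⟩ ⟨b₁, hnmem⟩)
  · have hAk : ((G.splitGraph A u).cutEdges (liftSet A A)).ncard = k := by
      rw [hcorr A (subset_refl A)]; exact F0
    match a₁, b₁, hne with
    | Sum.inr (), Sum.inr (), hne => exact absurd rfl hne
    | Sum.inl a, Sum.inr (), hne =>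
      exact noK (liftSet A A) _ _ (mem_liftSet.2 a.2) inr_not_mem_liftSet (le_of_eq hAk)
    | Sum.inr (), Sum.inl b, hne =>
      refine noK (liftSet A A)ᶜ _ _ inr_not_mem_liftSet
        (by simp only [Set.mem_compl_iff, not_not]; exact mem_liftSet.2 b.2) ?_
      rw [cutEdges_compl]
      exact le_of_eq hAk
    | Sum.inl a, Sum.inl b, hne =>
      have hab : a.1 ≠ b.1 := fun h => hne (congrArg Sum.inl (Subtype.ext h))
      have hnok := (hG.2 a.1 b.1 hab).2
      have hexB : ∃ B : Set V, a.1 ∈ B ∧ b.1 ∉ B ∧ (G.cutEdges B).ncard ≤ k := by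
        by_contra hall
        push_neg at hall
        refine hnok (hasEdgeDisjointPaths_of_cuts G hab (k + 1) ?_)
        intro B hmem hnmem
        have := hall B hmem hnmem
        omega
      obtain ⟨B, haB, hbB, hBk⟩ := hexB
      by_cases h1 : B ⊆ A
      · refine noK (liftSet A B) _ _ (mem_liftSet.2 haB)
          (fun hmem => hbB (mem_liftSet.1 hmem)) ?_
        rw [hcorr B h1]
        exact hBk
      · by_cases h2 : Aᶜ ⊆ B
        · have hBcA : Bᶜ ⊆ A := Set.compl_subset_comm.1 h2
          refine noK (liftSet A Bᶜ)ᶜ _ _ (fun hmem => (mem_liftSet.1 hmem) haB)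
            (by simp only [Set.mem_compl_iff, not_not]; exact mem_liftSet.2 hbB) ?_
          rw [cutEdges_compl, hcorr Bᶜ hBcA, cutEdges_compl]
          exact hBk
        · obtain ⟨w, hwA, hwB⟩ := Set.not_subset.1 h2
          have hsub := cutEdges_submod G B A
          have hBA : k ≤ (G.cutEdges (B ∪ A)).ncard := by
            refine F1 (B ∪ A) ⟨a.1, Or.inl haB⟩ ⟨w, ?_⟩
            simp only [Set.mem_compl_iff, Set.mem_union]
            push_neg
            exact ⟨hwB, hwA⟩
          have hBiA : (G.cutEdges (B ∩ A)).ncard ≤ k := by omega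
          refine noK (liftSet A (B ∩ A)) _ _ (mem_liftSet.2 ⟨haB, a.2⟩)
            (fun hmem => hbB (mem_liftSet.1 hmem).1) ?_
          rw [hcorr (B ∩ A) (Set.inter_subset_right)]
          exact hBiA

end Main
end Multigraph

/-- Let `G` be exactly `k`-edge-connected and let
`S = ⟨A, Aᶜ⟩` be a non-trivial minimum edge cut, with cut edges enumerated as
`f i` having endpoints `u i ∈ A` and `v i ∉ A`.  Then the two multigraphs
`G₁` and `G₂` obtained by vertex splitting `G` with respect to `S` are both
exactly `k`-edge-connected. -/
theorem splitGraph_exactlyEdgeConnected {V E : Type} [Fintype V] [Fintype E]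
    (G : Multigraph V E) (k : ℕ) (hG : G.ExactlyEdgeConnected k) (A : Set V)
    (hA₁ : ∃ x ∈ A, ∃ y ∈ A, x ≠ y) (hA₂ : ∃ x ∈ Aᶜ, ∃ y ∈ Aᶜ, x ≠ y)
    (hmin : ∀ B : Set V, B.Nonempty → Bᶜ.Nonempty →
      (G.cutEdges A).ncard ≤ (G.cutEdges B).ncard)
    (u v : Fin k → V) (f : Fin k → E)
    (hinj : Function.Injective f) (hrange : Set.range f = G.cutEdges A)
    (hends : ∀ i, G.ends (f i) = s(u i, v i))
    (hu : ∀ i, u i ∈ A) (hv : ∀ i, v i ∉ A) :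
    (G.splitGraph A u).ExactlyEdgeConnected k ∧
      (G.splitGraph Aᶜ v).ExactlyEdgeConnected k := by
  obtain ⟨x, hxA, y, hyA, hxy⟩ := hA₁
  obtain ⟨x', hx'A, y', hy'A, hx'y'⟩ := hA₂
  constructor
  · exact Multigraph.split_one hG ⟨x, hxA⟩ ⟨x', hx'A⟩ hinj hrange hends hu hv
  · refine Multigraph.split_one (u := v) (v := u) hG ⟨x', hx'A⟩ ?_ hinj ?_ ?_ hv ?_
    · rw [compl_compl]; exact ⟨x, hxA⟩
    · rw [Multigraph.cutEdges_compl]; exact hrange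
    · intro i; rw [hends i]; exact Sym2.eq_swap
    · intro i; simp only [Set.mem_compl_iff, not_not]; exact hu i
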